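/- Let ⟨·,·⟩ be the standard symplectic form on ℤ^{2g} and let M be a ℤ-submodule of ℤ[ℤ^{2g}] generated by elements of the form α·w with α ∈ ℤ, w ∈ ℤ^{2g}. For w ∈ ℤ^{2g} let α_M(w) denote the least positive integer α with α·w ∈ M (and 0 if none exists). If M is a Lie ideal of ℤ[ℤ^{2g}] (bracket [w,v] = ⟨w,v⟩·(w+v)), then for all k, i ∈ ℤ^{2g}, α_M(k) divides α_M(i) · gcd over t=1..g of (gcd(k_{2t-1}, k_{2t}) · gcd(i_{2t-1}, i_{2t})). -/

import Mathlib

/-- The bracket on the free `ℤ`-module on `ℤⁿ` defined on basis elements by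
`[w, v] = ⟨w, v⟩ • (w + v)` and extended `ℤ`-bilinearly. -/
noncomputable def br {n : ℕ} (B : (Fin n → ℤ) → (Fin n → ℤ) → ℤ)
    (x y : (Fin n → ℤ) →₀ ℤ) : (Fin n → ℤ) →₀ ℤ :=
  x.sum fun w a => y.sum fun v b => Finsupp.single (w + v) (a * b * B w v)

/-- The standard symplectic form on `ℤ^{2g}`. -/
def symp (g : ℕ) (w v : Fin (2 * g) → ℤ) : ℤ :=
  ∑ t : Fin g,
    (w ⟨2 * t.1, by have := t.2; omega⟩ * v ⟨2 * t.1 + 1, by have := t.2; omega⟩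
      - v ⟨2 * t.1, by have := t.2; omega⟩ * w ⟨2 * t.1 + 1, by have := t.2; omega⟩)

/-- `α_M(w)` : the least positive integer `α` such that `α • w ∈ M`, and `0` if
no such integer exists. -/
noncomputable def alphaM {n : ℕ} (M : Submodule ℤ ((Fin n → ℤ) →₀ ℤ)) (w : Fin n → ℤ) : ℕ :=
  sInf {a : ℕ | 0 < a ∧ (a : ℤ) • Finsupp.single w (1 : ℤ) ∈ M}

lemma br_single {n : ℕ} (B : (Fin n → ℤ) → (Fin n → ℤ) → ℤ) (w v : Fin n → ℤ) (a b : ℤ) :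
    br B (Finsupp.single w a) (Finsupp.single v b) = Finsupp.single (w + v) (a * b * B w v) := by
  unfold br
  rw [Finsupp.sum_single_index, Finsupp.sum_single_index]
  · simp
  · simp

lemma smul_one_single {n : ℕ} (w : Fin n → ℤ) (a : ℤ) :
    a • Finsupp.single w (1 : ℤ) = Finsupp.single w a := by
  rw [Finsupp.smul_single', mul_one]

lemma alphaM_dvd {n : ℕ} (M : Submodule ℤ ((Fin n → ℤ) →₀ ℤ)) (k : Fin n → ℤ) (a : ℤ)
    (ha : Finsupp.single k a ∈ M) : (alphaM M k : ℤ) ∣ a := by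
  set T := {a : ℕ | 0 < a ∧ (a : ℤ) • Finsupp.single k (1 : ℤ) ∈ M} with hT
  by_cases hne : T.Nonempty
  · obtain ⟨hpos, hM⟩ := Nat.sInf_mem hne
    rw [smul_one_single] at hM
    set N : ℤ := ((sInf T : ℕ) : ℤ) with hN
    have hNpos : (0:ℤ) < N := by rw [hN]; exact_mod_cast hpos
    have hr : Finsupp.single k (a % N) ∈ M := by
      have : a % N = a - (a / N) * N := by rw [Int.emod_def]; ring
      rw [this]
      have : Finsupp.single k (a - a / N * N) =
          Finsupp.single k a - (a / N) • Finsupp.single k N := by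
        rw [Finsupp.smul_single', ← Finsupp.single_sub]
      rw [this]
      exact M.sub_mem ha (M.smul_mem _ hM)
    have hr0 : a % N = 0 := by
      by_contra h
      have hrpos : 0 < a % N := lt_of_le_of_ne (Int.emod_nonneg a (ne_of_gt hNpos)) (Ne.symm h)
      have hrlt : a % N < N := Int.emod_lt_of_pos a hNpos
      have : (a % N).toNat ∈ T := by
        constructor
        · omega
        · rw [smul_one_single]
          rwa [Int.toNat_of_nonneg (le_of_lt hrpos)]
      have := Nat.sInf_le this
      omega
    have hd := Int.dvd_of_emod_eq_zero hr0
    have : alphaM M k = sInf T := rfl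
    rw [this]
    exact hd
  · have h0 : alphaM M k = 0 := by
      rw [alphaM, ← hT, Set.not_nonempty_iff_eq_empty.mp hne, Nat.sInf_empty]
    rw [h0]
    norm_num
    by_contra hcon
    apply hne
    refine ⟨a.natAbs, ⟨Int.natAbs_pos.mpr hcon, ?_⟩⟩
    rw [smul_one_single]
    rcases Int.natAbs_eq a with h | h
    · rwa [← h]
    · rw [← neg_neg ((a.natAbs : ℤ)), ← h]
      have : Finsupp.single k (-a) = -Finsupp.single k a := by simp
      rw [this]
      exact M.neg_mem ha

lemma alphaM_mem {n : ℕ} (M : Submodule ℤ ((Fin n → ℤ) →₀ ℤ)) (w : Fin n → ℤ)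
    (h : alphaM M w ≠ 0) : Finsupp.single w ((alphaM M w : ℤ)) ∈ M := by
  have hne : {a : ℕ | 0 < a ∧ (a : ℤ) • Finsupp.single w (1 : ℤ) ∈ M}.Nonempty := by
    by_contra hc
    exact h (by rw [alphaM, Set.not_nonempty_iff_eq_empty.mp hc, Nat.sInf_empty])
  obtain ⟨h1, h2⟩ := Nat.sInf_mem hne
  rw [smul_one_single] at h2
  exact h2

lemma symp_add_left (g : ℕ) (a b c : Fin (2 * g) → ℤ) :
    symp g (a + b) c = symp g a c + symp g b c := by
  unfold symp
  rw [← Finset.sum_add_distrib]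
  apply Finset.sum_congr rfl
  intros
  simp only [Pi.add_apply]
  ring

lemma symp_sub_self (g : ℕ) (u z : Fin (2 * g) → ℤ) :
    symp g u (z - u) = symp g u z := by
  unfold symp
  apply Finset.sum_congr rfl
  intros
  simp only [Pi.sub_apply]
  ring

def pv (g : ℕ) (t : Fin g) (x y : ℤ) : Fin (2 * g) → ℤ :=
  fun j => if j.1 = 2 * t.1 then x else if j.1 = 2 * t.1 + 1 then y else 0

lemma symp_pv_left (g : ℕ) (t : Fin g) (x y : ℤ) (i : Fin (2 * g) → ℤ) :
    symp g i (pv g t x y) =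
      i ⟨2 * t.1, by have := t.2; omega⟩ * y - x * i ⟨2 * t.1 + 1, by have := t.2; omega⟩ := by
  unfold symp
  rw [Finset.sum_eq_single t]
  · simp only [pv]
    split_ifs <;> first | ring1 | (exfalso; omega)
  · intro s _ hst
    have hv : s.1 ≠ t.1 := fun h => hst (Fin.ext h)
    simp only [pv]
    split_ifs <;> first | ring1 | (exfalso; omega)
  · intro h
    exact absurd (Finset.mem_univ t) h

lemma symp_pv_right (g : ℕ) (t : Fin g) (x y : ℤ) (k : Fin (2 * g) → ℤ) :
    symp g (pv g t x y) k =
      x * k ⟨2 * t.1 + 1, by have := t.2; omega⟩ - k ⟨2 * t.1, by have := t.2; omega⟩ * y := by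
  unfold symp
  rw [Finset.sum_eq_single t]
  · simp only [pv]
    split_ifs <;> first | ring1 | (exfalso; omega)
  · intro s _ hst
    have hv : s.1 ≠ t.1 := fun h => hst (Fin.ext h)
    simp only [pv]
    split_ifs <;> first | ring1 | (exfalso; omega)
  · intro h
    exact absurd (Finset.mem_univ t) h

lemma combo (PP : ℤ → Prop)
    (hsub : ∀ b1 b2 : ℤ, PP b1 → PP b2 → PP (b1 - b2))
    (hmul : ∀ c b : ℤ, PP b → PP (c * b))
    (i0 i1 k0 k1 : ℤ)
    (hAB : ∀ x y : ℤ, PP ((i0 * y - x * i1) * (x * k1 - k0 * y))) :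
    PP ((Int.gcd i0 i1 : ℤ) * (Int.gcd k0 k1 : ℤ)) := by
  set x0 : ℤ := -Int.gcdB i0 i1 with hx0
  set y0 : ℤ := Int.gcdA i0 i1 with hy0
  set x' : ℤ := Int.gcdB k0 k1 with hx'
  set y' : ℤ := -Int.gcdA k0 k1 with hy'
  have hA0 : i0 * y0 - x0 * i1 = (Int.gcd i0 i1 : ℤ) := by
    rw [hx0, hy0]
    have h := Int.gcd_eq_gcd_ab i0 i1
    linear_combination -h
  have hB' : x' * k1 - k0 * y' = (Int.gcd k0 k1 : ℤ) := by
    rw [hx', hy']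
    have h := Int.gcd_eq_gcd_ab k0 k1
    linear_combination -h
  obtain ⟨a', ha'⟩ : (Int.gcd i0 i1 : ℤ) ∣ (i0 * y' - x' * i1) :=
    dvd_sub ((Int.gcd_dvd_left i0 i1).mul_right y') ((Int.gcd_dvd_right i0 i1).mul_left x')
  have e1 := hAB (x0 + x') (y0 + y')
  have e2 := hmul (1 + a') _ (hAB x0 y0)
  have e3 := hAB x' y'
  have e4 := hsub _ _ (hsub _ _ e1 e2) e3
  have heq : (i0 * (y0 + y') - (x0 + x') * i1) * ((x0 + x') * k1 - k0 * (y0 + y')) -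
      (1 + a') * ((i0 * y0 - x0 * i1) * (x0 * k1 - k0 * y0)) -
      (i0 * y' - x' * i1) * (x' * k1 - k0 * y') =
      (Int.gcd i0 i1 : ℤ) * (Int.gcd k0 k1 : ℤ) := by
    linear_combination ((x' * k1 - k0 * y') - a' * (x0 * k1 - k0 * y0)) * hA0 +
      (Int.gcd i0 i1 : ℤ) * hB' + (x0 * k1 - k0 * y0) * ha'
  rwa [heq] at e4

theorem stmt4 (g : ℕ) (M : Submodule ℤ ((Fin (2 * g) → ℤ) →₀ ℤ))
    (hgeom : ∃ S : Set ((Fin (2 * g) → ℤ) →₀ ℤ),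
      S ⊆ {x | ∃ (a : ℤ) (w : Fin (2 * g) → ℤ), x = a • Finsupp.single w (1 : ℤ)} ∧
      M = Submodule.span ℤ S)
    (hideal : ∀ x ∈ M, ∀ y, br (symp g) x y ∈ M) :
    ∀ k i : Fin (2 * g) → ℤ,
      alphaM M k ∣ alphaM M i *
        Finset.univ.gcd (fun t : Fin g =>
          Int.gcd (k ⟨2 * t.1, by have := t.2; omega⟩) (k ⟨2 * t.1 + 1, by have := t.2; omega⟩)
            * Int.gcd (i ⟨2 * t.1, by have := t.2; omega⟩)
                (i ⟨2 * t.1 + 1, by have := t.2; omega⟩)) := by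
  intro k i
  by_cases hαi : alphaM M i = 0
  · rw [hαi, zero_mul]
    exact dvd_zero _
  set αi : ℤ := (alphaM M i : ℤ) with hαidef
  have hi : Finsupp.single i αi ∈ M := alphaM_mem M i hαi
  have step : ∀ (c : ℤ) (w : Fin (2 * g) → ℤ), Finsupp.single w c ∈ M →
      ∀ v, Finsupp.single (w + v) (c * symp g w v) ∈ M := by
    intro c w hw v
    have h := hideal _ hw (Finsupp.single v 1)
    rw [br_single, mul_one] at h
    exact h
  have one : Finsupp.single k (αi * symp g i k) ∈ M := by
    have h1 := step αi i hi (k - i)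
    rw [show i + (k - i) = k from by ring, symp_sub_self] at h1
    exact h1
  have two : ∀ v, Finsupp.single k (αi * symp g i v * (symp g i k + symp g v k)) ∈ M := by
    intro v
    have h1 := step αi i hi v
    have h2 := step _ _ h1 (k - (i + v))
    rw [show (i + v) + (k - (i + v)) = k from by ring, symp_sub_self, symp_add_left] at h2
    exact h2
  have hPsub : ∀ b1 b2 : ℤ, Finsupp.single k (αi * b1) ∈ M → Finsupp.single k (αi * b2) ∈ M →
      Finsupp.single k (αi * (b1 - b2)) ∈ M := by
    intro b1 b2 h1 h2
    have h := M.sub_mem h1 h2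
    rwa [← Finsupp.single_sub, ← mul_sub] at h
  have hPmul : ∀ c b : ℤ, Finsupp.single k (αi * b) ∈ M → Finsupp.single k (αi * (c * b)) ∈ M := by
    intro c b h
    have h2 := M.smul_mem c h
    rw [Finsupp.smul_single'] at h2
    rwa [show αi * (c * b) = c * (αi * b) from by ring]
  have key : ∀ t : Fin g,
      Finsupp.single k (αi *
        ((Int.gcd (i ⟨2 * t.1, by have := t.2; omega⟩) (i ⟨2 * t.1 + 1, by have := t.2; omega⟩) : ℤ)
          * (Int.gcd (k ⟨2 * t.1, by have := t.2; omega⟩)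
              (k ⟨2 * t.1 + 1, by have := t.2; omega⟩) : ℤ))) ∈ M := by
    intro t
    refine combo (fun β => Finsupp.single k (αi * β) ∈ M) hPsub hPmul _ _ _ _ ?_
    intro x y
    have h1 := two (pv g t x y)
    rw [symp_pv_left, symp_pv_right, mul_assoc] at h1
    have h2 := hPmul (i ⟨2 * t.1, by have := t.2; omega⟩ * y -
      x * i ⟨2 * t.1 + 1, by have := t.2; omega⟩) (symp g i k) one
    have h3 := hPsub _ _ h1 h2
    rwa [show (i ⟨2 * t.1, by have := t.2; omega⟩ * y - x * i ⟨2 * t.1 + 1, by have := t.2; omega⟩) *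
        (symp g i k + (x * k ⟨2 * t.1 + 1, by have := t.2; omega⟩ - k ⟨2 * t.1, by have := t.2; omega⟩ * y)) -
        (i ⟨2 * t.1, by have := t.2; omega⟩ * y - x * i ⟨2 * t.1 + 1, by have := t.2; omega⟩) * symp g i k =
        (i ⟨2 * t.1, by have := t.2; omega⟩ * y - x * i ⟨2 * t.1 + 1, by have := t.2; omega⟩) *
        (x * k ⟨2 * t.1 + 1, by have := t.2; omega⟩ - k ⟨2 * t.1, by have := t.2; omega⟩ * y)
        from by ring] at h3
  have keyN : ∀ t : Fin g, alphaM M k ∣ alphaM M i *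
      (Int.gcd (k ⟨2 * t.1, by have := t.2; omega⟩) (k ⟨2 * t.1 + 1, by have := t.2; omega⟩)
        * Int.gcd (i ⟨2 * t.1, by have := t.2; omega⟩) (i ⟨2 * t.1 + 1, by have := t.2; omega⟩)) := by
    intro t
    have hd := alphaM_dvd M k _ (key t)
    rw [← Int.natCast_dvd_natCast]
    convert hd using 1
    push_cast
    ring
  have hg := Finset.dvd_gcd (fun t (_ : t ∈ Finset.univ) => keyN t)
  rwa [Finset.gcd_mul_left, normalize_eq] at hg
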